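/- arXiv:math/0310265 — 2 statements merged into one kernel-verified Lean document; each statement's English description precedes it below -/
import Mathlib

section
/- Suppose n_{γ₀} ≥ 2 for some γ₀ ∈ Γ (i.e., N is not abelian). Then the element g = 1 + e^{γ₀}_{1,1} − (1/(n_{γ₀}−1)) Σ_{i=2}^{n_{γ₀}} e^{γ₀}_{i,i} of N satisfies E_{Z(N)}(g) = 1, and f = (1^o ⊗ g)·e is a separating element of N with f ≠ e. In particular, a nonabelian N admits separating elements different from the symmetric one e. -/
set_option maxHeartbeats 1000000
set_option synthInstance.maxHeartbeats 1000000
set_option linter.unusedSectionVars false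


/- Context: `N = ⨁_{γ ∈ Γ} M_{n γ}(ℂ)`, with matrix units `matUnit n γ i j`,
`N^o ⊗ N` the algebraic tensor product of the opposite algebra with `N`,
`mulMap` the multiplication map `m(a^o ⊗ b) = a * b`, `sepE` the symmetric
separating element `e = Σ_γ Σ_{i,j} (1/n_γ) (e^γ_{i,j})^o ⊗ e^γ_{j,i}`, and
`EZ` the canonical conditional expectation onto the center of `N`. -/

open scoped TensorProduct
open MulOpposite

/-- The algebra `N = ⨁_{γ ∈ Γ} M_{n γ}(ℂ)`. -/
abbrev NAlg {Γ : Type*} [Fintype Γ] (n : Γ → ℕ) : Type _ :=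
  ∀ γ : Γ, Matrix (Fin (n γ)) (Fin (n γ)) ℂ

/-- The matrix units `e^γ_{i,j}` of `N`. -/
noncomputable def matUnit {Γ : Type*} [Fintype Γ] [DecidableEq Γ] (n : Γ → ℕ)
    (γ : Γ) (i j : Fin (n γ)) : NAlg n :=
  Pi.single γ (Matrix.single i j 1)

/-- The multiplication map `m : N^o ⊗ N → N`, `m(a^o ⊗ b) = ab`. -/
noncomputable def mulMap {Γ : Type*} [Fintype Γ] (n : Γ → ℕ) :
    ((NAlg n)ᵐᵒᵖ ⊗[ℂ] NAlg n) →ₗ[ℂ] NAlg n :=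
  (LinearMap.mul' ℂ (NAlg n)).comp
    (TensorProduct.map (opLinearEquiv ℂ).symm.toLinearMap LinearMap.id)

/-- The symmetric separating element `e = Σ_γ Σ_{i,j} (1/n_γ) (e^γ_{i,j})^o ⊗ e^γ_{j,i}`. -/
noncomputable def sepE {Γ : Type*} [Fintype Γ] [DecidableEq Γ] (n : Γ → ℕ) :
    (NAlg n)ᵐᵒᵖ ⊗[ℂ] NAlg n :=
  ∑ γ : Γ, ∑ i : Fin (n γ), ∑ j : Fin (n γ),
    (n γ : ℂ)⁻¹ • (op (matUnit n γ i j) ⊗ₜ[ℂ] matUnit n γ j i)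

/-- `f ∈ N^o ⊗ N` is a separating element of `N` if `f(a^o ⊗ 1) = f(1 ⊗ a)` for all
`a ∈ N` and `m(f) = 1`. -/
def IsSepElt {Γ : Type*} [Fintype Γ] (n : Γ → ℕ) (f : (NAlg n)ᵐᵒᵖ ⊗[ℂ] NAlg n) : Prop :=
  (∀ a : NAlg n, f * (op a ⊗ₜ[ℂ] (1 : NAlg n)) = f * ((1 : (NAlg n)ᵐᵒᵖ) ⊗ₜ[ℂ] a)) ∧
    mulMap n f = 1

/-- The canonical conditional expectation `E_{Z(N)} : N → Z(N)`,
`E_{Z(N)}(x) = Σ_γ Σ_{i,j} (1/n_γ) e^γ_{i,j} x e^γ_{j,i}`. -/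
noncomputable def EZ {Γ : Type*} [Fintype Γ] [DecidableEq Γ] (n : Γ → ℕ)
    (x : NAlg n) : NAlg n :=
  ∑ γ : Γ, ∑ i : Fin (n γ), ∑ j : Fin (n γ),
    (n γ : ℂ)⁻¹ • (matUnit n γ i j * x * matUnit n γ j i)

section Aux

variable {Γ : Type*} [Fintype Γ] [DecidableEq Γ] (n : Γ → ℕ)

lemma matUnit_mul_same (γ : Γ) (i j k l : Fin (n γ)) :
    matUnit n γ i j * matUnit n γ k l = if j = k then matUnit n γ i l else 0 := by
  unfold matUnit
  rw [← Pi.single_mul]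
  by_cases h : j = k
  · subst h
    simp [Matrix.single_mul_single_same]
  · rw [Matrix.single_mul_single_of_ne (c := (1 : ℂ)) i j k h (1 : ℂ), Pi.single_zero, if_neg h]

lemma matUnit_mul_ne {γ δ : Γ} (h : γ ≠ δ) (i j : Fin (n γ)) (k l : Fin (n δ)) :
    matUnit n γ i j * matUnit n δ k l = 0 := by
  funext ε
  simp only [matUnit, Pi.mul_apply, Pi.zero_apply]
  rcases eq_or_ne ε δ with rfl | hd
  · rw [Pi.single_eq_of_ne (Ne.symm h), zero_mul]
  · rw [Pi.single_eq_of_ne hd, mul_zero]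

lemma sum_stdDiag (m : ℕ) :
    (∑ i : Fin m, Matrix.single i i (1 : ℂ)) = 1 := by
  ext a b
  rw [Matrix.sum_apply]
  by_cases hab : a = b
  · subst hab
    rw [Matrix.one_apply_eq]
    rw [Finset.sum_eq_single a]
    · simp [Matrix.single]
    · intro i _ hi
      simp [Matrix.single, hi]
    · simp
  · rw [Matrix.one_apply_ne hab]
    refine Finset.sum_eq_zero fun i _ => ?_
    simp only [Matrix.single, Matrix.of_apply, ite_eq_right_iff]
    rintro ⟨rfl, rfl⟩
    exact absurd rfl hab

lemma sum_matUnit_diag_single (γ : Γ) :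
    (∑ i : Fin (n γ), matUnit n γ i i) = Pi.single γ 1 := by
  unfold matUnit
  have hs : ∀ M : Matrix (Fin (n γ)) (Fin (n γ)) ℂ,
      Pi.single γ M = LinearMap.single ℂ (fun δ => Matrix (Fin (n δ)) (Fin (n δ)) ℂ) γ M :=
    fun _ => rfl
  simp_rw [hs]
  rw [← map_sum, sum_stdDiag (n γ)]

lemma sum_matUnit_diag :
    (∑ γ : Γ, ∑ i : Fin (n γ), matUnit n γ i i) = 1 := by
  have : ∀ γ : Γ, (∑ i : Fin (n γ), matUnit n γ i i) = Pi.single γ ((1 : NAlg n) γ) := by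
    intro γ
    rw [sum_matUnit_diag_single]
    rfl
  rw [Finset.sum_congr rfl fun γ _ => this γ]
  exact Finset.univ_sum_single (1 : NAlg n)

lemma card_smul_inv {γ : Γ} (hγ : 1 ≤ n γ) (x : NAlg n) :
    (n γ) • ((n γ : ℂ)⁻¹ • x) = x := by
  rw [← Nat.cast_smul_eq_nsmul ℂ, smul_smul, mul_inv_cancel₀, one_smul]
  exact Nat.cast_ne_zero.mpr (by omega)

lemma EZ_add (x y : NAlg n) : EZ n (x + y) = EZ n x + EZ n y := by
  simp [EZ, mul_add, add_mul, smul_add, Finset.sum_add_distrib]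

lemma EZ_smul (c : ℂ) (x : NAlg n) : EZ n (c • x) = c • EZ n x := by
  simp only [EZ, Finset.smul_sum, mul_smul_comm, smul_mul_assoc]
  refine Finset.sum_congr rfl fun γ _ => Finset.sum_congr rfl fun i _ =>
    Finset.sum_congr rfl fun j _ => ?_
  rw [smul_comm]

/-- `EZ` as a linear map. -/
noncomputable def EZlin : NAlg n →ₗ[ℂ] NAlg n where
  toFun := EZ n
  map_add' := EZ_add n
  map_smul' := EZ_smul n

lemma EZ_one (hn : ∀ γ, 1 ≤ n γ) : EZ n (1 : NAlg n) = 1 := by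
  unfold EZ
  have : ∀ γ : Γ, ∀ i j : Fin (n γ),
      (n γ : ℂ)⁻¹ • (matUnit n γ i j * 1 * matUnit n γ j i)
        = (n γ : ℂ)⁻¹ • matUnit n γ i i := by
    intro γ i j
    rw [mul_one, matUnit_mul_same, if_pos rfl]
  calc ∑ γ : Γ, ∑ i : Fin (n γ), ∑ j : Fin (n γ),
        (n γ : ℂ)⁻¹ • (matUnit n γ i j * 1 * matUnit n γ j i)
      = ∑ γ : Γ, ∑ i : Fin (n γ), ∑ _j : Fin (n γ),
        ((n γ : ℂ)⁻¹ • matUnit n γ i i : NAlg n) := by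
        refine Finset.sum_congr rfl fun γ _ => Finset.sum_congr rfl fun i _ =>
          Finset.sum_congr rfl fun j _ => this γ i j
    _ = ∑ γ : Γ, ∑ i : Fin (n γ), matUnit n γ i i := by
        refine Finset.sum_congr rfl fun γ _ => Finset.sum_congr rfl fun i _ => ?_
        rw [Finset.sum_const, Finset.card_univ, Fintype.card_fin]
        exact card_smul_inv n (hn γ) _
    _ = 1 := sum_matUnit_diag n

lemma EZ_matUnit_diag (hn : ∀ γ, 1 ≤ n γ) (γ₀ : Γ) (k : Fin (n γ₀)) :
    EZ n (matUnit n γ₀ k k) = (n γ₀ : ℂ)⁻¹ • (Pi.single γ₀ 1 : NAlg n) := by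
  unfold EZ
  rw [Finset.sum_eq_single γ₀]
  · have h1 : ∀ i j : Fin (n γ₀),
        (n γ₀ : ℂ)⁻¹ • (matUnit n γ₀ i j * matUnit n γ₀ k k * matUnit n γ₀ j i)
          = if j = k then (n γ₀ : ℂ)⁻¹ • matUnit n γ₀ i i else 0 := by
      intro i j
      rw [matUnit_mul_same]
      by_cases h : j = k
      · subst h
        rw [if_pos rfl, if_pos rfl, matUnit_mul_same, if_pos rfl]
      · rw [if_neg h, if_neg h, zero_mul, smul_zero]
    rw [Finset.sum_congr rfl fun i _ => Finset.sum_congr rfl fun j (_ : j ∈ Finset.univ) => h1 i j]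
    have h2 : ∀ i : Fin (n γ₀),
        (∑ j : Fin (n γ₀), if j = k then (n γ₀ : ℂ)⁻¹ • matUnit n γ₀ i i else 0)
          = (n γ₀ : ℂ)⁻¹ • matUnit n γ₀ i i :=
      fun i => (Finset.sum_ite_eq' Finset.univ k _).trans (if_pos (Finset.mem_univ k))
    rw [Finset.sum_congr rfl fun i _ => h2 i, ← Finset.smul_sum, sum_matUnit_diag_single]
  · intro γ _ hγ
    refine Finset.sum_eq_zero fun i _ => Finset.sum_eq_zero fun j _ => ?_
    rw [matUnit_mul_ne n hγ, zero_mul, smul_zero]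
  · simp

lemma matUnit_repr (a : NAlg n) :
    a = ∑ γ : Γ, ∑ i : Fin (n γ), ∑ j : Fin (n γ), a γ i j • matUnit n γ i j := by
  funext δ
  simp only [Finset.sum_apply]
  rw [Finset.sum_eq_single δ]
  · have : ∀ i j : Fin (n δ), (a δ i j • matUnit n δ i j) δ
        = Matrix.single i j (a δ i j) := by
      intro i j
      simp [matUnit, Pi.single_eq_same, Matrix.smul_single]
    rw [Finset.sum_congr rfl fun i _ => Finset.sum_congr rfl fun j _ => this i j]
    exact Matrix.matrix_eq_sum_single (a δ)
  · intro γ _ hγ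
    refine Finset.sum_eq_zero fun i _ => Finset.sum_eq_zero fun j _ => ?_
    simp [matUnit, Pi.single_eq_of_ne (Ne.symm hγ)]
  · simp

lemma mulMap_tmul (a b : NAlg n) : mulMap n (op a ⊗ₜ[ℂ] b) = a * b := by
  simp [mulMap]

lemma sepE_comm_matUnit (δ : Γ) (k l : Fin (n δ)) :
    sepE n * (op (matUnit n δ k l) ⊗ₜ[ℂ] (1 : NAlg n))
      = sepE n * ((1 : (NAlg n)ᵐᵒᵖ) ⊗ₜ[ℂ] matUnit n δ k l) := by
  have hL : sepE n * (op (matUnit n δ k l) ⊗ₜ[ℂ] (1 : NAlg n))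
      = ∑ j : Fin (n δ), (n δ : ℂ)⁻¹ • (op (matUnit n δ k j) ⊗ₜ[ℂ] matUnit n δ j l) := by
    unfold sepE
    simp only [Finset.sum_mul, smul_mul_assoc, Algebra.TensorProduct.tmul_mul_tmul, mul_one]
    rw [Finset.sum_eq_single δ]
    · rw [Finset.sum_comm]
      refine Finset.sum_congr rfl fun j _ => ?_
      rw [Finset.sum_eq_single l]
      · rw [← op_mul, matUnit_mul_same, if_pos rfl]
      · intro i _ hi
        rw [← op_mul, matUnit_mul_same, if_neg (Ne.symm hi), op_zero, TensorProduct.zero_tmul,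
          smul_zero]
      · simp
    · intro γ _ hγ
      refine Finset.sum_eq_zero fun i _ => Finset.sum_eq_zero fun j _ => ?_
      rw [← op_mul, matUnit_mul_ne n (Ne.symm hγ), op_zero, TensorProduct.zero_tmul, smul_zero]
    · simp
  have hR : sepE n * ((1 : (NAlg n)ᵐᵒᵖ) ⊗ₜ[ℂ] matUnit n δ k l)
      = ∑ j : Fin (n δ), (n δ : ℂ)⁻¹ • (op (matUnit n δ k j) ⊗ₜ[ℂ] matUnit n δ j l) := by
    unfold sepE
    simp only [Finset.sum_mul, smul_mul_assoc, Algebra.TensorProduct.tmul_mul_tmul, mul_one]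
    rw [Finset.sum_eq_single δ]
    · rw [Finset.sum_comm]
      refine Finset.sum_congr rfl fun j _ => ?_
      rw [Finset.sum_eq_single k]
      · rw [matUnit_mul_same, if_pos rfl]
      · intro i _ hi
        rw [matUnit_mul_same, if_neg hi, TensorProduct.tmul_zero, smul_zero]
      · simp
    · intro γ _ hγ
      refine Finset.sum_eq_zero fun i _ => Finset.sum_eq_zero fun j _ => ?_
      rw [matUnit_mul_ne n hγ, TensorProduct.tmul_zero, smul_zero]
    · simp
  rw [hL, hR]

lemma sepE_comm (a : NAlg n) :
    sepE n * (op a ⊗ₜ[ℂ] (1 : NAlg n))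
      = sepE n * ((1 : (NAlg n)ᵐᵒᵖ) ⊗ₜ[ℂ] a) := by
  conv_lhs => rw [matUnit_repr n a]
  conv_rhs => rw [matUnit_repr n a]
  simp only [Finset.op_sum, TensorProduct.sum_tmul, TensorProduct.tmul_sum, Finset.mul_sum]
  simp only [op_smul, TensorProduct.tmul_smul, ← TensorProduct.smul_tmul',
    mul_smul_comm]
  exact Finset.sum_congr rfl fun γ _ => Finset.sum_congr rfl fun i _ =>
    Finset.sum_congr rfl fun j _ => by rw [sepE_comm_matUnit]

lemma mulMap_g_sepE (g : NAlg n) :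
    mulMap n ((op (1 : NAlg n) ⊗ₜ[ℂ] g) * sepE n) = EZ n g := by
  unfold sepE EZ
  simp only [Finset.mul_sum, mul_smul_comm, Algebra.TensorProduct.tmul_mul_tmul,
    op_one, one_mul, map_sum, map_smul, mulMap_tmul, mul_assoc]

/-- The auxiliary "flipped multiplication" functional `ψ(a^o ⊗ b) = b a`. -/
noncomputable def psiAux : ((NAlg n)ᵐᵒᵖ ⊗[ℂ] NAlg n) →ₗ[ℂ] NAlg n :=
  TensorProduct.lift (LinearMap.mk₂ ℂ (fun x y => y * unop x)
    (fun x x' y => by simp [mul_add])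
    (fun c x y => by simp [mul_smul_comm])
    (fun x y y' => by simp [add_mul])
    (fun c x y => by simp [smul_mul_assoc]))

lemma psiAux_tmul (x : (NAlg n)ᵐᵒᵖ) (y : NAlg n) :
    psiAux n (x ⊗ₜ[ℂ] y) = y * unop x := rfl

lemma psiAux_mulleft (g : NAlg n) (t : (NAlg n)ᵐᵒᵖ ⊗[ℂ] NAlg n) :
    psiAux n ((op (1 : NAlg n) ⊗ₜ[ℂ] g) * t) = g * psiAux n t := by
  induction t using TensorProduct.induction_on with
  | zero => simp
  | tmul x y =>
      rw [Algebra.TensorProduct.tmul_mul_tmul, psiAux_tmul, psiAux_tmul, op_one, one_mul,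
        mul_assoc]
  | add u v hu hv => rw [mul_add, map_add, hu, hv, map_add, mul_add]

lemma psiAux_sepE (hn : ∀ γ, 1 ≤ n γ) : psiAux n (sepE n) = 1 := by
  unfold sepE
  simp only [map_sum, map_smul, psiAux_tmul, unop_op]
  have : ∀ γ : Γ, ∀ i j : Fin (n γ),
      (n γ : ℂ)⁻¹ • (matUnit n γ j i * matUnit n γ i j)
        = (n γ : ℂ)⁻¹ • matUnit n γ j j := by
    intro γ i j
    rw [matUnit_mul_same, if_pos rfl]
  calc ∑ γ : Γ, ∑ i : Fin (n γ), ∑ j : Fin (n γ),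
        (n γ : ℂ)⁻¹ • (matUnit n γ j i * matUnit n γ i j)
      = ∑ γ : Γ, ∑ i : Fin (n γ), ∑ j : Fin (n γ),
        ((n γ : ℂ)⁻¹ • matUnit n γ j j : NAlg n) := by
        refine Finset.sum_congr rfl fun γ _ => Finset.sum_congr rfl fun i _ =>
          Finset.sum_congr rfl fun j _ => this γ i j
    _ = ∑ γ : Γ, ∑ j : Fin (n γ), ∑ _i : Fin (n γ),
        ((n γ : ℂ)⁻¹ • matUnit n γ j j : NAlg n) := by
        exact Finset.sum_congr rfl fun γ _ => Finset.sum_comm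
    _ = ∑ γ : Γ, ∑ j : Fin (n γ), matUnit n γ j j := by
        refine Finset.sum_congr rfl fun γ _ => Finset.sum_congr rfl fun j _ => ?_
        rw [Finset.sum_const, Finset.card_univ, Fintype.card_fin]
        exact card_smul_inv n (hn γ) _
    _ = 1 := sum_matUnit_diag n

end Aux

/-- If `n γ₀ ≥ 2` (so `N` is not abelian), then
`g = 1 + e^{γ₀}_{1,1} − (1/(n_{γ₀}−1)) Σ_{i≠1} e^{γ₀}_{i,i}` satisfies `E_{Z(N)}(g) = 1`,
and `f = (1 ⊗ g)·e` is a separating element of `N` different from `e`. -/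
theorem exists_sep_ne_sepE {Γ : Type*} [Fintype Γ] [DecidableEq Γ] [Nonempty Γ]
    (n : Γ → ℕ) (hn : ∀ γ, 1 ≤ n γ) (γ₀ : Γ) (hγ₀ : 2 ≤ n γ₀) :
    EZ n (1 + matUnit n γ₀ ⟨0, by omega⟩ ⟨0, by omega⟩ -
        ((n γ₀ : ℂ) - 1)⁻¹ •
          ∑ i ∈ Finset.univ.erase (⟨0, by omega⟩ : Fin (n γ₀)), matUnit n γ₀ i i) = 1 ∧
      IsSepElt n
        ((op (1 : NAlg n) ⊗ₜ[ℂ]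
            (1 + matUnit n γ₀ ⟨0, by omega⟩ ⟨0, by omega⟩ -
              ((n γ₀ : ℂ) - 1)⁻¹ •
                ∑ i ∈ Finset.univ.erase (⟨0, by omega⟩ : Fin (n γ₀)),
                  matUnit n γ₀ i i)) * sepE n) ∧
      (op (1 : NAlg n) ⊗ₜ[ℂ]
          (1 + matUnit n γ₀ ⟨0, by omega⟩ ⟨0, by omega⟩ -
            ((n γ₀ : ℂ) - 1)⁻¹ •
              ∑ i ∈ Finset.univ.erase (⟨0, by omega⟩ : Fin (n γ₀)),
                matUnit n γ₀ i i)) * sepE n ≠ sepE n := by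
  set z : Fin (n γ₀) := ⟨0, by omega⟩ with hz
  set c : ℂ := ((n γ₀ : ℂ) - 1)⁻¹ with hc
  set S : NAlg n := ∑ i ∈ Finset.univ.erase z, matUnit n γ₀ i i with hS
  set g : NAlg n := 1 + matUnit n γ₀ z z - c • S with hg
  have hnc : ((n γ₀ : ℂ) - 1) ≠ 0 := by
    have : (n γ₀ : ℂ) ≠ 1 := by
      intro h
      have h1 : ((n γ₀ : ℕ) : ℂ) = ((1 : ℕ) : ℂ) := by simpa using h
      have h2 : n γ₀ = 1 := Nat.cast_injective h1
      omega
    exact sub_ne_zero.mpr this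
  -- EZ g = 1
  have hEZ : EZ n g = 1 := by
    have hEZsum : EZ n (c • S) = c • ∑ i ∈ Finset.univ.erase z, EZ n (matUnit n γ₀ i i) := by
      rw [show EZ n (c • S) = EZlin n (c • S) from rfl, map_smul, hS, map_sum]
      rfl
    have hadd : EZ n (1 + matUnit n γ₀ z z) = EZ n 1 + EZ n (matUnit n γ₀ z z) := EZ_add n _ _
    have hsub : EZ n g = EZ n (1 + matUnit n γ₀ z z) - EZ n (c • S) := by
      rw [hg, sub_eq_add_neg, sub_eq_add_neg]
      rw [show EZ n ((1 + matUnit n γ₀ z z) + -(c • S))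
          = EZlin n ((1 + matUnit n γ₀ z z) + -(c • S)) from rfl, map_add, map_neg]
      rfl
    rw [hsub, hadd, hEZsum, EZ_one n hn]
    have hdiag : ∀ i : Fin (n γ₀),
        EZ n (matUnit n γ₀ i i) = (n γ₀ : ℂ)⁻¹ • (Pi.single γ₀ 1 : NAlg n) :=
      fun i => EZ_matUnit_diag n hn γ₀ i
    rw [hdiag z, Finset.sum_congr rfl fun i _ => hdiag i, Finset.sum_const,
      Finset.card_erase_of_mem (Finset.mem_univ z), Finset.card_univ, Fintype.card_fin]
    have hcard : ((n γ₀ - 1 : ℕ) : ℂ) = (n γ₀ : ℂ) - 1 := by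
      push_cast [Nat.cast_sub (hn γ₀)]
      ring
    rw [← Nat.cast_smul_eq_nsmul ℂ, smul_smul, smul_smul, hcard, hc]
    have hmul : ((n γ₀ : ℂ) - 1)⁻¹ * ((n γ₀ : ℂ) - 1) * (n γ₀ : ℂ)⁻¹ = (n γ₀ : ℂ)⁻¹ := by
      rw [inv_mul_cancel₀ hnc, one_mul]
    rw [hmul]
    abel
  refine ⟨hEZ, ⟨?_, ?_⟩, ?_⟩
  · -- separating property part 1
    intro a
    rw [mul_assoc, mul_assoc, sepE_comm n a]
  · -- m(f) = 1
    rw [mulMap_g_sepE n g, hEZ]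
  · -- f ≠ e
    intro h
    have h1 : psiAux n ((op (1 : NAlg n) ⊗ₜ[ℂ] g) * sepE n) = psiAux n (sepE n) := by rw [h]
    rw [psiAux_mulleft, psiAux_sepE n hn, mul_one] at h1
    -- but g ≠ 1: evaluate at (γ₀, z, z)
    have h2 := congrFun (congrFun (congrFun h1 γ₀) z) z
    have hg00 : g γ₀ z z = 2 := by
      have hu : matUnit n γ₀ z z γ₀ z z = 1 := by
        simp [matUnit, Pi.single_eq_same, Matrix.single]
      have hSz : S γ₀ z z = 0 := by
        rw [hS]
        simp only [Finset.sum_apply, Matrix.sum_apply]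
        refine Finset.sum_eq_zero fun i hi => ?_
        have hiz : ¬ i = z := Finset.ne_of_mem_erase hi
        simp [matUnit, Pi.single_eq_same, Matrix.single, hiz]
      rw [hg]
      simp only [Pi.sub_apply, Pi.add_apply, Pi.smul_apply, Matrix.sub_apply, Matrix.add_apply,
        Matrix.smul_apply, smul_eq_mul]
      rw [hu, hSz, mul_zero, sub_zero, Pi.one_apply, Matrix.one_apply_eq]
      norm_num
    rw [hg00] at h2
    have h3 : (1 : NAlg n) γ₀ z z = 1 := by simp [Matrix.one_apply_eq]
    rw [h3] at h2
    norm_num at h2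
end

section
/- Let q be the unique invertible element of A_t with Δ(1) = Σ_γ Σ_{i,j} (1/n_γ) κ⁻¹(e^γ_{i,j} q) ⊗ e^γ_{j,i}. Then κ²(q) = q, E_{Z(A_t)}(q) = 1, and q is a positive element of A. -/
/- Context: a finite-dimensional C*-quantum groupoid (weak Hopf C*-algebra)
`(A, Δ, κ, ε)`, together with a fixed system of matrix units `e γ i j`
(`γ ∈ Γ` finite, `1 ≤ i,j ≤ n γ`) spanning the target Cartan subalgebra `A_t`.
The componentwise involution of `A ⊗[ℂ] A` is encoded by the field `starT`
(uniquely determined by `starT_add` and `starT_tmul`). -/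

open scoped TensorProduct ComplexOrder

/-- A finite-dimensional C*-quantum groupoid (weak Hopf C*-algebra) with a chosen
system of matrix units for its target Cartan subalgebra. -/
structure WeakHopfCStar (A : Type*) (Γ : Type*) [Fintype Γ] [DecidableEq Γ]
    [NormedRing A] [StarRing A] [CStarRing A] [NormedAlgebra ℂ A] [StarModule ℂ A]
    [FiniteDimensional ℂ A] (n : Γ → ℕ) where
  /-- the coproduct -/
  Δ : A →ₗ[ℂ] A ⊗[ℂ] A
  /-- the antipode -/
  κ : A →ₗ[ℂ] A
  /-- the counit -/
  ε : A →ₗ[ℂ] ℂ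
  /-- the componentwise involution of `A ⊗ A` -/
  starT : A ⊗[ℂ] A → A ⊗[ℂ] A
  starT_add : ∀ x y : A ⊗[ℂ] A, starT (x + y) = starT x + starT y
  starT_tmul : ∀ a b : A, starT (a ⊗ₜ[ℂ] b) = star a ⊗ₜ[ℂ] star b
  Δ_mul : ∀ a b : A, Δ (a * b) = Δ a * Δ b
  Δ_star : ∀ a : A, Δ (star a) = starT (Δ a)
  coassoc : ∀ a : A,
    (TensorProduct.assoc ℂ A A A) ((TensorProduct.map Δ LinearMap.id) (Δ a)) =
      (TensorProduct.map LinearMap.id Δ) (Δ a)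
  κ_antimul : ∀ x y : A, κ (x * y) = κ y * κ x
  κ_star_sq : ∀ a : A, κ (star (κ (star a))) = a
  κ_flip : ∀ a : A,
    (TensorProduct.map κ κ) (Δ a) = (TensorProduct.comm ℂ A A) (Δ (κ a))
  antipode : ∀ x : A,
    (TensorProduct.map ((LinearMap.mul' ℂ A).comp (TensorProduct.map κ LinearMap.id))
        LinearMap.id) ((TensorProduct.map Δ LinearMap.id) (Δ x)) =
      ((1 : A) ⊗ₜ[ℂ] x) * Δ 1
  ε_pos : ∀ a : A, 0 ≤ ε (star a * a)
  ε_counit_l : ∀ a : A,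
    (TensorProduct.lid ℂ A) ((TensorProduct.map ε LinearMap.id) (Δ a)) = a
  ε_counit_r : ∀ a : A,
    (TensorProduct.rid ℂ A) ((TensorProduct.map LinearMap.id ε) (Δ a)) = a
  ε_weak : ∀ x y : A,
    (LinearMap.mul' ℂ ℂ)
        ((TensorProduct.map ε ε) ((x ⊗ₜ[ℂ] (1 : A)) * Δ 1 * ((1 : A) ⊗ₜ[ℂ] y))) =
      ε (x * y)
  n_pos : ∀ γ : Γ, 1 ≤ n γ
  /-- the matrix units of the target Cartan subalgebra `A_t` -/
  e : (γ : Γ) → Fin (n γ) → Fin (n γ) → A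
  e_target : ∀ (γ : Γ) (i j : Fin (n γ)),
    Δ (e γ i j) = Δ 1 * (e γ i j ⊗ₜ[ℂ] (1 : A)) ∧
      Δ (e γ i j) = (e γ i j ⊗ₜ[ℂ] (1 : A)) * Δ 1
  e_mul_same : ∀ (γ : Γ) (i j k l : Fin (n γ)),
    e γ i j * e γ k l = if j = k then e γ i l else 0
  e_mul_ne : ∀ (γ δ : Γ), γ ≠ δ → ∀ (i j : Fin (n γ)) (k l : Fin (n δ)),
    e γ i j * e δ k l = 0
  e_star : ∀ (γ : Γ) (i j : Fin (n γ)), star (e γ i j) = e γ j i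
  e_sum : ∑ γ : Γ, ∑ i : Fin (n γ), e γ i i = 1
  e_span : ∀ x : A,
    (Δ x = Δ 1 * (x ⊗ₜ[ℂ] (1 : A)) ∧ Δ x = (x ⊗ₜ[ℂ] (1 : A)) * Δ 1) →
      x ∈ Submodule.span ℂ
        (Set.range fun p : Σ γ : Γ, Fin (n γ) × Fin (n γ) => e p.1 p.2.1 p.2.2)

namespace WeakHopfCStar

variable {A Γ : Type*} [Fintype Γ] [DecidableEq Γ]
  [NormedRing A] [StarRing A] [CStarRing A] [NormedAlgebra ℂ A] [StarModule ℂ A]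
  [FiniteDimensional ℂ A] {n : Γ → ℕ}

/-- The target Cartan subalgebra `A_t`. -/
def tgt (W : WeakHopfCStar A Γ n) : Set A :=
  {x | W.Δ x = W.Δ 1 * (x ⊗ₜ[ℂ] (1 : A)) ∧ W.Δ x = (x ⊗ₜ[ℂ] (1 : A)) * W.Δ 1}

/-- The source Cartan subalgebra `A_s`. -/
def src (W : WeakHopfCStar A Γ n) : Set A :=
  {x | W.Δ x = W.Δ 1 * ((1 : A) ⊗ₜ[ℂ] x) ∧ W.Δ x = ((1 : A) ⊗ₜ[ℂ] x) * W.Δ 1}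

/-- The inverse of the antipode, `κ⁻¹ = * ∘ κ ∘ *`. -/
noncomputable def κinv (W : WeakHopfCStar A Γ n) (a : A) : A := star (W.κ (star a))

/-- The canonical conditional expectation `E_{Z(A_t)}` of `A_t` onto its center. -/
noncomputable def EZt (W : WeakHopfCStar A Γ n) (x : A) : A :=
  ∑ γ : Γ, ∑ i : Fin (n γ), ∑ j : Fin (n γ),
    (n γ : ℂ)⁻¹ • (W.e γ i j * x * W.e γ j i)

/-- The defining property of the canonical element `q ∈ A_t`:
`Δ(1) = Σ_γ Σ_{i,j} (1/n_γ) κ⁻¹(e^γ_{i,j} q) ⊗ e^γ_{j,i}`. -/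
noncomputable def qFormula (W : WeakHopfCStar A Γ n) (q : A) : Prop :=
  W.Δ 1 = ∑ γ : Γ, ∑ i : Fin (n γ), ∑ j : Fin (n γ),
    (n γ : ℂ)⁻¹ • (W.κinv (W.e γ i j * q) ⊗ₜ[ℂ] W.e γ j i)

end WeakHopfCStar

namespace WeakHopfCStar

variable {A Γ : Type*} [Fintype Γ] [DecidableEq Γ]
  [NormedRing A] [StarRing A] [CStarRing A] [NormedAlgebra ℂ A] [StarModule ℂ A]
  [FiniteDimensional ℂ A] {n : Γ → ℕ}

/-- The deformed coproduct `Δ_k(a) = Δ(a)(1 ⊗ k⁻¹)`. -/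
noncomputable def Δk (W : WeakHopfCStar A Γ n) (k : A) : A →ₗ[ℂ] A ⊗[ℂ] A :=
  (LinearMap.mulRight ℂ ((1 : A) ⊗ₜ[ℂ] Ring.inverse k)).comp W.Δ

/-- The deformed antipode `κ_k(a) = k κ(a) k⁻¹`. -/
noncomputable def κk (W : WeakHopfCStar A Γ n) (k : A) : A →ₗ[ℂ] A :=
  (LinearMap.mulLeft ℂ k).comp ((LinearMap.mulRight ℂ (Ring.inverse k)).comp W.κ)

/-- The deformed counit `ε_k(a) = ε(a k)`. -/
noncomputable def εk (W : WeakHopfCStar A Γ n) (k : A) : A →ₗ[ℂ] ℂ :=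
  W.ε.comp (LinearMap.mulRight ℂ k)

end WeakHopfCStar


section Aux

namespace WeakHopfCStar

variable {A Γ : Type*} [Fintype Γ] [DecidableEq Γ]
  [NormedRing A] [StarRing A] [CStarRing A] [NormedAlgebra ℂ A] [StarModule ℂ A]
  [FiniteDimensional ℂ A] {n : Γ → ℕ} (W : WeakHopfCStar A Γ n)

lemma k_kinv (a : A) : W.κ (W.κinv a) = a := W.κ_star_sq a

lemma kinv_k (a : A) : W.κinv (W.κ a) = a := by
  have h := W.κ_star_sq (star a)
  rw [star_star] at h
  show star (W.κ (star (W.κ a))) = a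
  rw [h, star_star]

lemma k_injective : Function.Injective W.κ := by
  intro x y hxy
  rw [← W.kinv_k x, hxy, W.kinv_k]

lemma star_kinv (a : A) : star (W.κinv a) = W.κ (star a) := by
  show star (star (W.κ (star a))) = _
  rw [star_star]

lemma eps_star (a : A) : W.ε (star a) = starRingEnd ℂ (W.ε a) := by
  have him : ∀ x : A, (W.ε (star x * x)).im = 0 := by
    intro x
    have h := (Complex.le_def.mp (W.ε_pos x)).2
    simpa using h.symm
  have him1 : (W.ε 1).im = 0 := by simpa using him 1
  have hsum : (W.ε (star a)).im + (W.ε a).im = 0 := by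
    have h := him (a + 1)
    rw [star_add, add_mul, mul_add, mul_add, map_add, map_add, map_add] at h
    simp only [star_one, one_mul, mul_one, Complex.add_im] at h
    linarith [him a, him1]
  have hdiff : (W.ε (star a)).re = (W.ε a).re := by
    have h := him (a + Complex.I • 1)
    have hstar : star (a + Complex.I • (1:A)) = star a + (-Complex.I) • (1:A) := by
      rw [star_add, star_smul, star_one]
      simp [Complex.star_def, Complex.conj_I]
    rw [hstar, add_mul, mul_add, mul_add, smul_mul_assoc, smul_mul_assoc,
      mul_smul_comm, mul_smul_comm, smul_smul, one_mul, mul_one, mul_one] at h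
    rw [map_add, map_add, map_add, map_smul, map_smul, map_smul] at h
    have hI : -Complex.I * Complex.I = 1 := by
      rw [neg_mul, Complex.I_mul_I, neg_neg]
    rw [hI, one_smul] at h
    simp only [smul_eq_mul, Complex.add_im, Complex.mul_im, Complex.I_re, Complex.I_im,
      Complex.neg_re, Complex.neg_im] at h
    have h2 := him a
    linarith [him a, him1]
  apply Complex.ext
  · simpa using hdiff
  · simp only [Complex.conj_im]
    linarith [hsum]

lemma e_zero_prop {γ : Γ} {i j : Fin (n γ)} (h : W.e γ i j = 0) (k l : Fin (n γ)) :
    W.e γ k l = 0 := by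
  have h1 : W.e γ k l = W.e γ k i * W.e γ i j * W.e γ j l := by
    rw [W.e_mul_same, if_pos rfl, W.e_mul_same, if_pos rfl]
  rw [h1, h, mul_zero, zero_mul]

lemma mul_sum3 (g : (γ : Γ) → Fin (n γ) → Fin (n γ) → ℂ) (γ : Γ) (a b : Fin (n γ)) :
    W.e γ a b * (∑ δ, ∑ k, ∑ l, g δ k l • W.e δ k l) = ∑ l, g γ b l • W.e γ a l := by
  rw [Finset.mul_sum]
  have key : ∀ δ : Γ, W.e γ a b * (∑ k, ∑ l, g δ k l • W.e δ k l)
      = if δ = γ then ∑ l, g γ b l • W.e γ a l else 0 := by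
    intro δ
    by_cases hδ : δ = γ
    · subst hδ
      rw [if_pos rfl, Finset.mul_sum]
      have key2 : ∀ k, W.e δ a b * (∑ l, g δ k l • W.e δ k l)
          = if k = b then ∑ l, g δ b l • W.e δ a l else 0 := by
        intro k
        rw [Finset.mul_sum]
        by_cases hk : k = b
        · subst hk
          rw [if_pos rfl]
          refine Finset.sum_congr rfl fun l _ => ?_
          rw [mul_smul_comm, W.e_mul_same, if_pos rfl]
        · rw [if_neg hk]
          refine Finset.sum_eq_zero fun l _ => ?_
          rw [mul_smul_comm, W.e_mul_same, if_neg (fun h => hk h.symm), smul_zero]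
      simp only [key2, Finset.sum_ite_eq', Finset.mem_univ, ite_true]
    · rw [if_neg hδ, Finset.mul_sum]
      refine Finset.sum_eq_zero fun k _ => ?_
      rw [Finset.mul_sum]
      refine Finset.sum_eq_zero fun l _ => ?_
      rw [mul_smul_comm, W.e_mul_ne γ δ (fun h => hδ h.symm), smul_zero]
  simp only [key, Finset.sum_ite_eq', Finset.mem_univ, ite_true]

lemma sum3_mul (g : (γ : Γ) → Fin (n γ) → Fin (n γ) → ℂ) (γ : Γ) (a b : Fin (n γ)) :
    (∑ δ, ∑ k, ∑ l, g δ k l • W.e δ k l) * W.e γ a b = ∑ k, g γ k a • W.e γ k b := by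
  rw [Finset.sum_mul]
  have key : ∀ δ : Γ, (∑ k, ∑ l, g δ k l • W.e δ k l) * W.e γ a b
      = if δ = γ then ∑ k, g γ k a • W.e γ k b else 0 := by
    intro δ
    by_cases hδ : δ = γ
    · subst hδ
      rw [if_pos rfl, Finset.sum_mul]
      refine Finset.sum_congr rfl fun k _ => ?_
      rw [Finset.sum_mul]
      have key2 : ∀ l, (g δ k l • W.e δ k l) * W.e δ a b
          = if l = a then g δ k a • W.e δ k b else 0 := by
        intro l
        by_cases hl : l = a
        · subst hl
          rw [if_pos rfl, smul_mul_assoc, W.e_mul_same, if_pos rfl]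
        · rw [if_neg hl, smul_mul_assoc, W.e_mul_same, if_neg hl, smul_zero]
      simp only [key2, Finset.sum_ite_eq', Finset.mem_univ, ite_true]
    · rw [if_neg hδ, Finset.sum_mul]
      refine Finset.sum_eq_zero fun k _ => ?_
      rw [Finset.sum_mul]
      refine Finset.sum_eq_zero fun l _ => ?_
      rw [smul_mul_assoc, W.e_mul_ne δ γ hδ, smul_zero]
  simp only [key, Finset.sum_ite_eq', Finset.mem_univ, ite_true]

lemma e_mul_sum3_mul_e (g : (γ : Γ) → Fin (n γ) → Fin (n γ) → ℂ) (γ : Γ)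
    (a b cc d : Fin (n γ)) :
    W.e γ a b * (∑ δ, ∑ k, ∑ l, g δ k l • W.e δ k l) * W.e γ cc d
      = g γ b cc • W.e γ a d := by
  rw [W.mul_sum3, Finset.sum_mul]
  have key : ∀ l, (g γ b l • W.e γ a l) * W.e γ cc d
      = if l = cc then g γ b cc • W.e γ a d else 0 := by
    intro l
    by_cases hl : l = cc
    · subst hl; rw [if_pos rfl, smul_mul_assoc, W.e_mul_same, if_pos rfl]
    · rw [if_neg hl, smul_mul_assoc, W.e_mul_same, if_neg hl, smul_zero]
  simp only [key, Finset.sum_ite_eq', Finset.mem_univ, ite_true]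

lemma sum3_mul_sum3 (f g : (γ : Γ) → Fin (n γ) → Fin (n γ) → ℂ) :
    (∑ γ, ∑ i, ∑ j, f γ i j • W.e γ i j) * (∑ δ, ∑ k, ∑ l, g δ k l • W.e δ k l)
      = ∑ γ, ∑ i, ∑ j, ∑ l, (f γ i j * g γ j l) • W.e γ i l := by
  rw [Finset.sum_mul]
  refine Finset.sum_congr rfl fun γ _ => ?_
  rw [Finset.sum_mul]
  refine Finset.sum_congr rfl fun i _ => ?_
  rw [Finset.sum_mul]
  refine Finset.sum_congr rfl fun j _ => ?_
  rw [smul_mul_assoc, W.mul_sum3, Finset.smul_sum]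
  refine Finset.sum_congr rfl fun l _ => ?_
  rw [smul_smul]

lemma tmul_right_cancel₀ {x z : A} (hz : z ≠ 0) (h : x ⊗ₜ[ℂ] z = 0) : x = 0 := by
  have hz' : ¬ (∀ ψ : Module.Dual ℂ A, ψ z = 0) := fun hcon =>
    hz ((Module.forall_dual_apply_eq_zero_iff ℂ z).mp hcon)
  push_neg at hz'
  obtain ⟨ψ, hψ⟩ := hz'
  rw [← Module.forall_dual_apply_eq_zero_iff ℂ x]
  intro φ
  have happ := congrArg (fun t => (TensorProduct.lid ℂ ℂ) ((TensorProduct.map φ ψ) t)) h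
  simp only [TensorProduct.map_tmul, TensorProduct.lid_tmul, map_zero, smul_eq_mul] at happ
  exact (mul_eq_zero.mp happ).resolve_right hψ

end WeakHopfCStar

end Aux

lemma psd_exists_eq_conjTranspose_mul {m : ℕ} {M : Matrix (Fin m) (Fin m) ℂ}
    (h : M.PosSemidef) : ∃ B : Matrix (Fin m) (Fin m) ℂ, M = B.conjTranspose * B := by
  open scoped MatrixOrder Matrix.Norms.L2Operator in
  obtain ⟨B, hB⟩ := CStarAlgebra.nonneg_iff_eq_star_mul_self.mp h.nonneg
  exact ⟨B, hB⟩

set_option maxHeartbeats 1600000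
set_option synthInstance.maxHeartbeats 400000

/-- The canonical element `q` satisfies `κ²(q) = q`, `E_{Z(A_t)}(q) = 1`, and `q` is a
positive element of `A`. -/
theorem WeakHopfCStar.q_properties {A Γ : Type*} [Fintype Γ] [DecidableEq Γ]
    [NormedRing A] [StarRing A] [CStarRing A] [NormedAlgebra ℂ A] [StarModule ℂ A]
    [FiniteDimensional ℂ A] {n : Γ → ℕ} (W : WeakHopfCStar A Γ n)
    (q : A) (hqt : q ∈ W.tgt) (hqu : IsUnit q) (hqf : W.qFormula q) :
    W.κ (W.κ q) = q ∧ W.EZt q = 1 ∧ ∃ b : A, q = star b * b := by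
  classical
  obtain ⟨c, hc⟩ := (Submodule.mem_span_range_iff_exists_fun ℂ).mp (W.e_span q hqt)
  set Q : (γ : Γ) → Fin (n γ) → Fin (n γ) → ℂ := fun γ i j => c ⟨γ, (i, j)⟩ with hQdef
  have hq : q = ∑ γ, ∑ i, ∑ j, Q γ i j • W.e γ i j := by
    rw [← hc]
    calc (∑ p : Σ γ : Γ, Fin (n γ) × Fin (n γ), c p • W.e p.1 p.2.1 p.2.2)
        = ∑ γ, ∑ b : Fin (n γ) × Fin (n γ), c ⟨γ, b⟩ • W.e γ b.1 b.2 :=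
          Finset.sum_sigma Finset.univ (fun _ => Finset.univ) _
      _ = _ := Finset.sum_congr rfl fun γ _ => Fintype.sum_prod_type _
  have hS : W.Δ 1 = ∑ γ, ∑ i, ∑ j,
      (n γ : ℂ)⁻¹ • (W.κinv (W.e γ i j * q) ⊗ₜ[ℂ] W.e γ j i) := hqf
  -- counit identity
  have hcounit1 : ∑ γ, ∑ i, ∑ j,
      (n γ : ℂ)⁻¹ • (W.ε (W.e γ j i) • W.κinv (W.e γ i j * q)) = 1 := by
    have h := W.ε_counit_r 1
    rw [hS] at h
    simp only [map_sum, map_smul, TensorProduct.map_tmul, LinearMap.id_coe, id_eq,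
      TensorProduct.rid_tmul] at h
    exact h
  -- E_Z(q) = 1
  have hEZ : ∑ γ, ∑ i, ∑ j,
      (n γ : ℂ)⁻¹ • (W.e γ i j * q * W.e γ j i) = 1 := by
    have hX : (TensorProduct.map LinearMap.id W.Δ) (W.Δ 1)
        = ∑ γ, ∑ i, ∑ j, ∑ δ, ∑ k, ∑ l, (n γ : ℂ)⁻¹ • ((n δ : ℂ)⁻¹ •
            (W.κinv (W.e γ i j * q) ⊗ₜ[ℂ]
              ((W.e γ j i * W.κinv (W.e δ k l * q)) ⊗ₜ[ℂ] W.e δ l k))) := by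
      conv_lhs => rw [hS]
      simp only [map_sum, map_smul, TensorProduct.map_tmul, LinearMap.id_coe, id_eq]
      refine Finset.sum_congr rfl fun γ _ => Finset.sum_congr rfl fun i _ =>
        Finset.sum_congr rfl fun j _ => ?_
      rw [(W.e_target γ j i).2, hS]
      simp only [Finset.mul_sum, mul_smul_comm, Algebra.TensorProduct.tmul_mul_tmul,
        one_mul, TensorProduct.tmul_sum, TensorProduct.tmul_smul, Finset.smul_sum]
    have hY : (TensorProduct.map W.Δ LinearMap.id) (W.Δ 1)
        = ∑ γ, ∑ i, ∑ j, ∑ δ, ∑ k, ∑ l, (n γ : ℂ)⁻¹ • ((n δ : ℂ)⁻¹ •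
            ((W.κinv (W.e γ i j * q) ⊗ₜ[ℂ]
              (W.e γ j i * W.κinv (W.e δ k l * q))) ⊗ₜ[ℂ] W.e δ l k)) := by
      have h2 : (TensorProduct.map W.Δ LinearMap.id) (W.Δ 1)
          = (TensorProduct.assoc ℂ A A A).symm
              ((TensorProduct.map LinearMap.id W.Δ) (W.Δ 1)) := by
        rw [← W.coassoc 1, LinearEquiv.symm_apply_apply]
      rw [h2, hX]
      simp only [map_sum, map_smul, TensorProduct.assoc_symm_tmul]
    have hant := W.antipode 1
    rw [hY] at hant
    simp only [map_sum, map_smul, TensorProduct.map_tmul, LinearMap.coe_comp,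
      Function.comp_apply, LinearMap.id_coe, id_eq, LinearMap.mul'_apply, W.k_kinv] at hant
    rw [← Algebra.TensorProduct.one_def, one_mul] at hant
    have hR := congrArg (fun t => (TensorProduct.rid ℂ A)
      ((TensorProduct.map LinearMap.id W.ε) t)) hant
    simp only [map_sum, map_smul, TensorProduct.map_tmul, LinearMap.id_coe, id_eq,
      TensorProduct.rid_tmul] at hR
    rw [W.ε_counit_r 1] at hR
    rw [← hR]
    refine Finset.sum_congr rfl fun γ _ => Finset.sum_congr rfl fun i _ =>
      Finset.sum_congr rfl fun j _ => ?_
    conv_lhs => rw [show W.e γ i j * q * W.e γ j i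
      = (W.e γ i j * q * W.e γ j i) * 1 from (mul_one _).symm, ← hcounit1]
    rw [Finset.mul_sum, Finset.smul_sum]
    refine Finset.sum_congr rfl fun δ _ => ?_
    rw [Finset.mul_sum, Finset.smul_sum]
    refine Finset.sum_congr rfl fun k _ => ?_
    rw [Finset.mul_sum, Finset.smul_sum]
    refine Finset.sum_congr rfl fun l _ => ?_
    rw [mul_smul_comm, mul_smul_comm, mul_assoc]
  -- the identity coming from κ applied to 1
  have hC : ∑ γ, ∑ i, ∑ j,
      (n γ : ℂ)⁻¹ • (W.ε (W.e γ i j * q) • W.e γ j i) = 1 := by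
    have hflip := W.κ_flip 1
    rw [hS] at hflip
    simp only [map_sum, map_smul, TensorProduct.map_tmul, W.k_kinv] at hflip
    have hΔκ1 : W.Δ (W.κ 1) = ∑ γ, ∑ i, ∑ j,
        (n γ : ℂ)⁻¹ • (W.κ (W.e γ j i) ⊗ₜ[ℂ] (W.e γ i j * q)) := by
      have h2 : W.Δ (W.κ 1) = (TensorProduct.comm ℂ A A).symm
          (∑ γ, ∑ i, ∑ j, (n γ : ℂ)⁻¹ • ((W.e γ i j * q) ⊗ₜ[ℂ] W.κ (W.e γ j i))) := by
        rw [hflip, LinearEquiv.symm_apply_apply]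
      rw [h2]
      simp only [map_sum, map_smul, TensorProduct.comm_symm_tmul]
    have h3 := W.ε_counit_r (W.κ 1)
    rw [hΔκ1] at h3
    simp only [map_sum, map_smul, TensorProduct.map_tmul, LinearMap.id_coe, id_eq,
      TensorProduct.rid_tmul] at h3
    apply W.k_injective
    rw [map_sum]
    calc (∑ γ, W.κ (∑ i, ∑ j, (n γ : ℂ)⁻¹ • (W.ε (W.e γ i j * q) • W.e γ j i)))
        = ∑ γ, ∑ i, ∑ j, (n γ : ℂ)⁻¹ • (W.ε (W.e γ i j * q) • W.κ (W.e γ j i)) := by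
          refine Finset.sum_congr rfl fun γ _ => ?_
          rw [map_sum]
          refine Finset.sum_congr rfl fun i _ => ?_
          rw [map_sum]
          refine Finset.sum_congr rfl fun j _ => ?_
          rw [map_smul, map_smul]
      _ = W.κ 1 := h3
  -- self-adjointness of the diagonal legs, from starT(Δ1) = Δ1
  have hstar_u : ∀ (γ : Γ) (i : Fin (n γ)), W.e γ i i ≠ 0 →
      star (W.κinv (W.e γ i i * q)) = W.κinv (W.e γ i i * q) := by
    have hds := W.Δ_star 1
    rw [star_one] at hds
    have hT : W.starT (W.Δ 1) = ∑ γ, ∑ i, ∑ j,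
        (n γ : ℂ)⁻¹ • (star (W.κinv (W.e γ i j * q)) ⊗ₜ[ℂ] W.e γ i j) := by
      rw [hS]
      show (AddMonoidHom.mk' W.starT W.starT_add) _ = _
      rw [map_sum]
      refine Finset.sum_congr rfl fun γ _ => ?_
      rw [map_sum]
      refine Finset.sum_congr rfl fun i _ => ?_
      rw [map_sum]
      refine Finset.sum_congr rfl fun j _ => ?_
      show W.starT _ = _
      rw [TensorProduct.smul_tmul', W.starT_tmul, W.e_star, star_smul,
        TensorProduct.smul_tmul']
      congr 1
      simp [star_inv₀]
    have hcomb : (∑ γ, ∑ i, ∑ j,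
          (n γ : ℂ)⁻¹ • (star (W.κinv (W.e γ i j * q)) ⊗ₜ[ℂ] W.e γ i j))
        = ∑ γ, ∑ i, ∑ j,
          (n γ : ℂ)⁻¹ • (W.κinv (W.e γ i j * q) ⊗ₜ[ℂ] W.e γ j i) := by
      rw [← hT, ← hds, hS]
    have hφ : ∀ φ : Module.Dual ℂ A,
        (∑ γ, ∑ i, ∑ j, ((n γ : ℂ)⁻¹ * φ (star (W.κinv (W.e γ i j * q)))) • W.e γ i j)
          = ∑ γ, ∑ i, ∑ j, ((n γ : ℂ)⁻¹ * φ (W.κinv (W.e γ i j * q))) • W.e γ j i := by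
      intro φ
      have happ := congrArg (fun t => (TensorProduct.lid ℂ A)
        ((TensorProduct.map φ LinearMap.id) t)) hcomb
      simp only [map_sum, map_smul, TensorProduct.map_tmul, LinearMap.id_coe, id_eq,
        TensorProduct.lid_tmul, smul_smul] at happ
      exact happ
    intro γ i hne
    have hn : (n γ : ℂ)⁻¹ ≠ 0 :=
      inv_ne_zero (Nat.cast_ne_zero.mpr (Nat.one_le_iff_ne_zero.mp (W.n_pos γ)))
    have hext : ∀ φ : Module.Dual ℂ A,
        φ (star (W.κinv (W.e γ i i * q))) = φ (W.κinv (W.e γ i i * q)) := by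
      intro φ
      have h1 := congrArg (fun x => W.e γ i i * x * W.e γ i i) (hφ φ)
      rw [W.e_mul_sum3_mul_e] at h1
      have hRHS : W.e γ i i * (∑ γ, ∑ i, ∑ j,
            ((n γ : ℂ)⁻¹ * φ (W.κinv (W.e γ i j * q))) • W.e γ j i) * W.e γ i i
          = ((n γ : ℂ)⁻¹ * φ (W.κinv (W.e γ i i * q))) • W.e γ i i := by
        have hsw : (∑ γ, ∑ i, ∑ j,
              ((n γ : ℂ)⁻¹ * φ (W.κinv (W.e γ i j * q))) • W.e γ j i)
            = ∑ δ, ∑ x, ∑ y, ((n δ : ℂ)⁻¹ * φ (W.κinv (W.e δ y x * q))) • W.e δ x y :=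
          Finset.sum_congr rfl fun δ _ => Finset.sum_comm
        rw [hsw, W.e_mul_sum3_mul_e]
      rw [hRHS] at h1
      have h2 := sub_eq_zero.mpr h1
      rw [← sub_smul] at h2
      rcases smul_eq_zero.mp h2 with h3 | h3
      · rw [← mul_sub] at h3
        rcases mul_eq_zero.mp h3 with h4 | h4
        · exact absurd h4 hn
        · exact sub_eq_zero.mp h4
      · exact absurd h3 hne
    have hz : star (W.κinv (W.e γ i i * q)) - W.κinv (W.e γ i i * q) = 0 := by
      rw [← Module.forall_dual_apply_eq_zero_iff ℂ]
      intro φ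
      rw [map_sub, hext φ, sub_self]
    exact sub_eq_zero.mp hz
  -- per-block matrix facts
  have hkey : ∀ γ : Γ,
      (∀ i j, (starRingEnd ℂ) (Q γ j i) • W.e γ i j = Q γ i j • W.e γ i j) ∧
      ∃ B : Matrix (Fin (n γ)) (Fin (n γ)) ℂ,
        ∀ i j, (∑ k, (starRingEnd ℂ) (B k i) * B k j) • W.e γ i j
          = Q γ i j • W.e γ i j := by
    intro γ
    have hpos : 0 < n γ := W.n_pos γ
    have hn0 : (n γ : ℂ) ≠ 0 := Nat.cast_ne_zero.mpr (Nat.one_le_iff_ne_zero.mp (W.n_pos γ))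
    by_cases hzb : ∃ k l : Fin (n γ), W.e γ k l = 0
    · obtain ⟨k0, l0, hz0⟩ := hzb
      have hzero : ∀ k l, W.e γ k l = 0 := W.e_zero_prop hz0
      constructor
      · intro i j; rw [hzero i j, smul_zero, smul_zero]
      · exact ⟨0, fun i j => by rw [hzero i j, smul_zero, smul_zero]⟩
    push_neg at hzb
    have hD : ∀ i j : Fin (n γ), W.ε (W.e γ i j * q) = if j = i then (n γ : ℂ) else 0 := by
      intro i j
      have h1 := congrArg (fun x => W.e γ j j * x * W.e γ i i) hC
      have hsw : (∑ δ, ∑ k, ∑ l, (n δ : ℂ)⁻¹ • (W.ε (W.e δ k l * q) • W.e δ l k))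
          = ∑ δ, ∑ x, ∑ y, ((n δ : ℂ)⁻¹ * W.ε (W.e δ y x * q)) • W.e δ x y := by
        refine Finset.sum_congr rfl fun δ _ => ?_
        rw [Finset.sum_comm]
        exact Finset.sum_congr rfl fun x _ => Finset.sum_congr rfl fun y _ => smul_smul _ _ _
      rw [hsw, W.e_mul_sum3_mul_e, mul_one, W.e_mul_same] at h1
      by_cases hij : j = i
      · subst hij
        rw [if_pos rfl] at h1
        rw [if_pos rfl]
        have h2 : (((n γ : ℂ)⁻¹ * W.ε (W.e γ j j * q)) - 1) • W.e γ j j = 0 := by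
          rw [sub_smul, one_smul, h1, sub_self]
        rcases smul_eq_zero.mp h2 with h3 | h3
        · have h4 : (n γ : ℂ)⁻¹ * W.ε (W.e γ j j * q) = 1 := sub_eq_zero.mp h3
          have h5 := congrArg (fun t => (n γ : ℂ) * t) h4
          rwa [← mul_assoc, mul_inv_cancel₀ hn0, one_mul, mul_one] at h5
        · exact absurd h3 (hzb j j)
      · rw [if_neg hij] at h1
        rw [if_neg hij]
        rcases smul_eq_zero.mp h1 with h3 | h3
        · rcases mul_eq_zero.mp h3 with h4 | h4
          · exact absurd h4 (inv_ne_zero hn0)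
          · exact h4
        · exact absurd h3 (hzb j i)
    have hQM : ∀ i j : Fin (n γ), (∑ m, Q γ j m * W.ε (W.e γ i m))
        = if j = i then (n γ : ℂ) else 0 := by
      intro i j
      rw [← hD i j]
      have hmul : W.e γ i j * q = ∑ m, Q γ j m • W.e γ i m := by
        conv_lhs => rw [hq]
        exact W.mul_sum3 Q γ i j
      rw [hmul, map_sum]
      exact Finset.sum_congr rfl fun m _ => by rw [map_smul, smul_eq_mul]
    set N : Matrix (Fin (n γ)) (Fin (n γ)) ℂ := Matrix.of fun a b => W.ε (W.e γ b a)
      with hNdef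
    set QM : Matrix (Fin (n γ)) (Fin (n γ)) ℂ := Matrix.of fun a b => Q γ a b with hQMdef
    have hQN : QM * N = (n γ : ℂ) • 1 := by
      ext a b
      rw [Matrix.mul_apply]
      simp only [hNdef, hQMdef, Matrix.of_apply, Matrix.smul_apply, Matrix.one_apply,
        smul_eq_mul]
      rw [hQM b a]
      by_cases hab : a = b
      · rw [if_pos hab, if_pos hab, mul_one]
      · rw [if_neg hab, if_neg hab, mul_zero]
    have hNright : N * ((n γ : ℂ)⁻¹ • QM) = 1 := by
      apply mul_eq_one_comm.mp
      rw [Matrix.smul_mul, hQN, smul_smul, inv_mul_cancel₀ hn0, one_smul]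
    have hdet : IsUnit N.det := Matrix.isUnit_det_of_right_inverse hNright
    have hNinv : N⁻¹ = (n γ : ℂ)⁻¹ • QM := Matrix.inv_eq_right_inv hNright
    have hNherm : N.IsHermitian := by
      show N.conjTranspose = N
      ext a b
      rw [Matrix.conjTranspose_apply]
      simp only [hNdef, Matrix.of_apply]
      rw [Complex.star_def, ← W.eps_star, W.e_star]
    have hNherm' : N.conjTranspose = N := hNherm
    have hNpsd : N.PosSemidef := by
      refine Matrix.PosSemidef.of_dotProduct_mulVec_nonneg hNherm fun x => ?_
      set z : Fin (n γ) := ⟨0, hpos⟩ with hz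
      set w : A := ∑ b, (starRingEnd ℂ) (x b) • W.e γ z b with hw
      have hsw : star w = ∑ a, x a • W.e γ a z := by
        rw [hw, star_sum]
        refine Finset.sum_congr rfl fun a _ => ?_
        rw [star_smul, W.e_star, Complex.star_def, Complex.conj_conj]
      have hww : star w * w = ∑ a, ∑ b, (x a * (starRingEnd ℂ) (x b)) • W.e γ a b := by
        rw [hsw, hw, Finset.sum_mul]
        refine Finset.sum_congr rfl fun a _ => ?_
        rw [Finset.mul_sum]
        refine Finset.sum_congr rfl fun b _ => ?_
        rw [smul_mul_assoc, mul_smul_comm, smul_smul, W.e_mul_same, if_pos rfl]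
      have hdot : dotProduct (star x) (N.mulVec x) = W.ε (star w * w) := by
        rw [hww, map_sum]
        simp only [dotProduct, Matrix.mulVec, Pi.star_apply, Complex.star_def,
          hNdef, Matrix.of_apply, Finset.mul_sum, map_sum, map_smul, smul_eq_mul]
        rw [Finset.sum_comm]
        refine Finset.sum_congr rfl fun a _ => Finset.sum_congr rfl fun b _ => ?_
        ring
      rw [hdot]
      exact W.ε_pos w
    have hQeq : QM = (n γ : ℂ) • N⁻¹ := by
      rw [hNinv, smul_smul, mul_inv_cancel₀ hn0, one_smul]
    have hQherm' : QM.conjTranspose = QM := by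
      rw [hQeq, Matrix.conjTranspose_smul, Matrix.conjTranspose_nonsing_inv, hNherm']
      congr 1
      rw [Complex.star_def, Complex.conj_natCast]
    have hQpsd : QM.PosSemidef := by
      refine Matrix.PosSemidef.of_dotProduct_mulVec_nonneg hQherm' fun x => ?_
      set y := N⁻¹.mulVec x with hy
      have hxy : x = N.mulVec y := by
        rw [hy, Matrix.mulVec_mulVec, Matrix.mul_nonsing_inv _ hdet, Matrix.one_mulVec]
      have h1 : dotProduct (star x) (QM.mulVec x)
          = (n γ : ℂ) * dotProduct (star x) y := by
        rw [hQeq, Matrix.smul_mulVec, dotProduct_smul, smul_eq_mul, hy]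
      have h2 : dotProduct (star x) y = dotProduct (star y) (N.mulVec y) := by
        conv_lhs => rw [hxy, Matrix.star_mulVec]
        rw [← Matrix.dotProduct_mulVec, hNherm']
      rw [h1, h2]
      have h3 : (0:ℂ) ≤ (n γ) • dotProduct (star y) (N.mulVec y) :=
        nsmul_nonneg (hNpsd.dotProduct_mulVec_nonneg y) (n γ)
      rwa [nsmul_eq_mul] at h3
    obtain ⟨Bm, hBm⟩ := psd_exists_eq_conjTranspose_mul hQpsd
    constructor
    · intro i j
      have h5 := congrFun (congrFun hQherm' i) j
      rw [Matrix.conjTranspose_apply] at h5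
      simp only [hQMdef, Matrix.of_apply, Complex.star_def] at h5
      rw [h5]
    · refine ⟨Bm, fun i j => ?_⟩
      have h6 := congrFun (congrFun hBm i) j
      rw [Matrix.mul_apply] at h6
      simp only [Matrix.conjTranspose_apply, hQMdef, Matrix.of_apply,
        Complex.star_def] at h6
      rw [← h6]
  -- q is self-adjoint
  have hqsa : star q = q := by
    conv_lhs => rw [hq]
    rw [star_sum]
    conv_rhs => rw [hq]
    refine Finset.sum_congr rfl fun γ _ => ?_
    rw [star_sum]
    calc (∑ i, star (∑ j, Q γ i j • W.e γ i j))
        = ∑ i, ∑ j, (starRingEnd ℂ) (Q γ i j) • W.e γ j i := by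
          refine Finset.sum_congr rfl fun i _ => ?_
          rw [star_sum]
          refine Finset.sum_congr rfl fun j _ => ?_
          rw [star_smul, W.e_star, Complex.star_def]
      _ = ∑ j, ∑ i, (starRingEnd ℂ) (Q γ i j) • W.e γ j i := Finset.sum_comm
      _ = ∑ i, ∑ j, Q γ i j • W.e γ i j := by
          refine Finset.sum_congr rfl fun i _ => ?_
          refine Finset.sum_congr rfl fun j _ => ?_
          exact (hkey γ).1 i j
  -- κ²(q*e_ii) = e_ii q
  have hkk : ∀ (γ : Γ) (i : Fin (n γ)),
      W.κ (W.κ (star q * W.e γ i i)) = W.e γ i i * q := by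
    intro γ i
    by_cases h0 : W.e γ i i = 0
    · rw [h0, mul_zero, zero_mul, map_zero, map_zero]
    · have h := hstar_u γ i h0
      rw [W.star_kinv, star_mul, W.e_star] at h
      rw [h, W.k_kinv]
  refine ⟨?_, ?_, ?_⟩
  · -- κ²(q) = q
    have h2 : star q = ∑ γ, ∑ i, star q * W.e γ i i := by
      calc star q = star q * 1 := (mul_one _).symm
        _ = star q * ∑ γ, ∑ i, W.e γ i i := by rw [W.e_sum]
        _ = ∑ γ, ∑ i, star q * W.e γ i i := by
            rw [Finset.mul_sum]
            exact Finset.sum_congr rfl fun γ _ => Finset.mul_sum _ _ _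
    conv_lhs => rw [← hqsa, h2]
    simp only [map_sum]
    calc (∑ γ, ∑ i, W.κ (W.κ (star q * W.e γ i i)))
        = ∑ γ, ∑ i, W.e γ i i * q :=
          Finset.sum_congr rfl fun γ _ => Finset.sum_congr rfl fun i _ => hkk γ i
      _ = (∑ γ, ∑ i, W.e γ i i) * q := by
          rw [Finset.sum_mul]
          exact Finset.sum_congr rfl fun γ _ => (Finset.sum_mul _ _ _).symm
      _ = q := by rw [W.e_sum, one_mul]
  · show W.EZt q = 1
    unfold WeakHopfCStar.EZt
    exact hEZ
  · -- positivity
    choose B hB using fun γ => (hkey γ).2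
    refine ⟨∑ γ, ∑ i, ∑ j, B γ i j • W.e γ i j, ?_⟩
    have hsb : star (∑ γ, ∑ i, ∑ j, B γ i j • W.e γ i j)
        = ∑ γ, ∑ x, ∑ y, (starRingEnd ℂ) (B γ y x) • W.e γ x y := by
      rw [star_sum]
      refine Finset.sum_congr rfl fun γ _ => ?_
      rw [star_sum]
      calc (∑ i, star (∑ j, B γ i j • W.e γ i j))
          = ∑ i, ∑ j, (starRingEnd ℂ) (B γ i j) • W.e γ j i := by
            refine Finset.sum_congr rfl fun i _ => ?_
            rw [star_sum]
            refine Finset.sum_congr rfl fun j _ => ?_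
            rw [star_smul, W.e_star, Complex.star_def]
        _ = _ := Finset.sum_comm
    rw [hsb, W.sum3_mul_sum3 (fun γ x y => (starRingEnd ℂ) (B γ y x)) (fun γ i j => B γ i j)]
    calc q = ∑ γ, ∑ x, ∑ l, Q γ x l • W.e γ x l := hq
      _ = ∑ γ, ∑ x, ∑ y, ∑ l,
            ((starRingEnd ℂ) (B γ y x) * B γ y l) • W.e γ x l := by
          refine Finset.sum_congr rfl fun γ _ => Finset.sum_congr rfl fun x _ => ?_
          calc (∑ l, Q γ x l • W.e γ x l)
              = ∑ l, (∑ y, (starRingEnd ℂ) (B γ y x) * B γ y l) • W.e γ x l :=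
                Finset.sum_congr rfl fun l _ => (hB γ x l).symm
            _ = ∑ l, ∑ y, ((starRingEnd ℂ) (B γ y x) * B γ y l) • W.e γ x l :=
                Finset.sum_congr rfl fun l _ => Finset.sum_smul
            _ = ∑ y, ∑ l, ((starRingEnd ℂ) (B γ y x) * B γ y l) • W.e γ x l :=
                Finset.sum_comm
end
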